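/- Let n ≥ 1 and let S : ℝ → ℝ be differentiable on [0,∞) with 0 < S(y) ≤ 1 for all y ≥ 0 and S′(y) = −f(y), where f : [0,∞) → ℝ is nonnegative and nonincreasing. Let g : ℝ → ℝ satisfy 0 < g(t) < 1 for every t > 0, g antitone and convex on (0,∞). Let w ∈ [0,1], π a permutation of Fin n, v, α : Fin n → ℝ positive tuples, and define u j = w·v j + (1−w)·v (π j) and β j = w·α j + (1−w)·α (π j). Assume (v i − v j)·(α i − α j) ≥ 0 and (u i − u j)·(β i − β j) ≥ 0 for all i, j. Then for every x ≥ 0: ∏_{i=1}^n (1 − g(v i)·S(α i · x)) ≤ ∏_{i=1}^n (1 − g(u i)·S(β i · x)). -/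

import Mathlib

open Finset

lemma cc_pos {w a b : ℝ} (hw0 : 0 ≤ w) (hw1 : w ≤ 1) (ha : 0 < a) (hb : 0 < b) :
    0 < w * a + (1 - w) * b := by
  rcases le_total a b with h | h
  · nlinarith [mul_le_mul_of_nonneg_left h (by linarith : (0:ℝ) ≤ 1 - w)]
  · nlinarith [mul_le_mul_of_nonneg_left h hw0]

/-- Theorem 3.10 (core comparison): scale-family severities, largest claim
amounts under a single T-transform of the parameter matrix, usual stochastic
order. -/
theorem stmt_11 {n : ℕ} (hn : 1 ≤ n) (S f g : ℝ → ℝ)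
    (hS : ∀ y ≥ (0 : ℝ), 0 < S y ∧ S y ≤ 1)
    (hS' : ∀ y ≥ (0 : ℝ), HasDerivAt S (-(f y)) y)
    (hf_nonneg : ∀ y ≥ (0 : ℝ), 0 ≤ f y)
    (hf_anti : AntitoneOn f (Set.Ici 0))
    (hg : ∀ t > 0, 0 < g t ∧ g t < 1)
    (hg_anti : AntitoneOn g (Set.Ioi 0))
    (hg_conv : ConvexOn ℝ (Set.Ioi 0) g)
    (w : ℝ) (hw0 : 0 ≤ w) (hw1 : w ≤ 1)
    (π : Equiv.Perm (Fin n))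
    (v α u β : Fin n → ℝ)
    (hv : ∀ i, 0 < v i) (hα : ∀ i, 0 < α i)
    (hu_def : ∀ j, u j = w * v j + (1 - w) * v (π j))
    (hβ_def : ∀ j, β j = w * α j + (1 - w) * α (π j))
    (hsimv : ∀ i j, 0 ≤ (v i - v j) * (α i - α j))
    (hsimu : ∀ i j, 0 ≤ (u i - u j) * (β i - β j)) :
    ∀ x ≥ (0 : ℝ),
      ∏ i, (1 - g (v i) * S (α i * x)) ≤ ∏ i, (1 - g (u i) * S (β i * x)) := by
  intro x hx
  have hw1' : (0:ℝ) ≤ 1 - w := by linarith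
  -- continuity / differentiability of S on Ici 0
  have hScont : ContinuousOn S (Set.Ici 0) := fun y hy =>
    ((hS' y hy).continuousAt).continuousWithinAt
  have hintD : interior (Set.Ici (0:ℝ)) = Set.Ioi 0 := interior_Ici
  have hSdiff : DifferentiableOn ℝ S (interior (Set.Ici (0:ℝ))) := by
    rw [hintD]
    exact fun y hy => ((hS' y (le_of_lt hy)).differentiableAt).differentiableWithinAt
  have hderiv : ∀ y ∈ interior (Set.Ici (0:ℝ)), deriv S y = -(f y) := by
    rw [hintD]; exact fun y hy => (hS' y (le_of_lt hy)).deriv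
  have hSconv : ConvexOn ℝ (Set.Ici 0) S := by
    apply MonotoneOn.convexOn_of_deriv (convex_Ici 0) hScont hSdiff
    intro a ha b hb hab
    rw [hderiv a ha, hderiv b hb]
    have ha' : a ∈ Set.Ici (0:ℝ) := by rw [hintD] at ha; exact Set.mem_Ici.2 (le_of_lt (Set.mem_Ioi.1 ha))
    have hb' : b ∈ Set.Ici (0:ℝ) := by rw [hintD] at hb; exact Set.mem_Ici.2 (le_of_lt (Set.mem_Ioi.1 hb))
    have := hf_anti ha' hb' hab
    linarith
  have hSanti : AntitoneOn S (Set.Ici 0) := by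
    apply antitoneOn_of_deriv_nonpos (convex_Ici 0) hScont hSdiff
    intro a ha
    rw [hderiv a ha]
    have ha' : a ∈ Set.Ici (0:ℝ) := by rw [hintD] at ha; exact Set.mem_Ici.2 (le_of_lt (Set.mem_Ioi.1 ha))
    have := hf_nonneg a ha'
    linarith
  set X : Fin n → ℝ := fun i => 1 - g (v i) * S (α i * x) with hX
  have haxi : ∀ i, (0:ℝ) ≤ α i * x := fun i => mul_nonneg (hα i).le hx
  have hXpos : ∀ i, 0 < X i := by
    intro i
    have h1 := hg (v i) (hv i)
    have h2 := hS (α i * x) (haxi i)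
    have : g (v i) * S (α i * x) < 1 := by nlinarith
    simp only [hX]; linarith
  have hu_pos : ∀ j, 0 < u j := fun j => by
    rw [hu_def j]; exact cc_pos hw0 hw1 (hv j) (hv (π j))
  have hβ_pos : ∀ j, 0 < β j := fun j => by
    rw [hβ_def j]; exact cc_pos hw0 hw1 (hα j) (hα (π j))
  -- key per-index inequality
  have key : ∀ j, X j ^ w * X (π j) ^ (1 - w) ≤ 1 - g (u j) * S (β j * x) := by
    intro j
    set a₁ := v j; set a₂ := v (π j); set b₁ := α j; set b₂ := α (π j)
    have hg1 := hg a₁ (hv j)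
    have hg2 := hg a₂ (hv (π j))
    have hS1 := hS (b₁ * x) (haxi j)
    have hS2 := hS (b₂ * x) (haxi (π j))
    -- convexity of g
    have hgc : g (u j) ≤ w * g a₁ + (1 - w) * g a₂ := by
      have := hg_conv.2 (Set.mem_Ioi.2 (hv j)) (Set.mem_Ioi.2 (hv (π j))) hw0 hw1'
        (by ring : w + (1 - w) = 1)
      simpa [smul_eq_mul, hu_def j] using this
    -- convexity of S
    have hSc : S (β j * x) ≤ w * S (b₁ * x) + (1 - w) * S (b₂ * x) := by
      have hmem1 : b₁ * x ∈ Set.Ici (0:ℝ) := haxi j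
      have hmem2 : b₂ * x ∈ Set.Ici (0:ℝ) := haxi (π j)
      have := hSconv.2 hmem1 hmem2 hw0 hw1' (by ring : w + (1 - w) = 1)
      have heq : β j * x = w * (b₁ * x) + (1 - w) * (b₂ * x) := by
        rw [hβ_def j]; ring
      rw [heq]
      simpa [smul_eq_mul] using this
    -- sign alignment
    have hsign : 0 ≤ (g a₁ - g a₂) * (S (b₁ * x) - S (b₂ * x)) := by
      have hvα := hsimv j (π j)
      rcases le_total a₁ a₂ with hA | hA <;> rcases le_total b₁ b₂ with hB | hB
      · have h1 : g a₂ ≤ g a₁ := hg_anti (Set.mem_Ioi.2 (hv j)) (Set.mem_Ioi.2 (hv (π j))) hA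
        have h2 : S (b₂ * x) ≤ S (b₁ * x) :=
          hSanti (haxi j) (haxi (π j)) (mul_le_mul_of_nonneg_right hB hx)
        nlinarith
      · have h0 : (a₁ - a₂) * (b₁ - b₂) ≤ 0 := mul_nonpos_of_nonpos_of_nonneg (by linarith) (by linarith)
        have h0' : (a₁ - a₂) * (b₁ - b₂) = 0 := le_antisymm h0 (by nlinarith [hvα])
        rcases mul_eq_zero.1 h0' with h | h
        · have : a₁ = a₂ := by linarith
          rw [this]; simp
        · have : b₁ = b₂ := by linarith
          rw [this]; simp
      · have h0 : (a₁ - a₂) * (b₁ - b₂) ≤ 0 := mul_nonpos_of_nonneg_of_nonpos (by linarith) (by linarith)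
        have h0' : (a₁ - a₂) * (b₁ - b₂) = 0 := le_antisymm h0 (by nlinarith [hvα])
        rcases mul_eq_zero.1 h0' with h | h
        · have : a₁ = a₂ := by linarith
          rw [this]; simp
        · have : b₁ = b₂ := by linarith
          rw [this]; simp
      · have h1 : g a₁ ≤ g a₂ := hg_anti (Set.mem_Ioi.2 (hv (π j))) (Set.mem_Ioi.2 (hv j)) hA
        have h2 : S (b₁ * x) ≤ S (b₂ * x) :=
          hSanti (haxi (π j)) (haxi j) (mul_le_mul_of_nonneg_right hB hx)
        nlinarith
    -- combine
    have hgu := hg (u j) (hu_pos j)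
    have hSβ := hS (β j * x) (mul_nonneg (hβ_pos j).le hx)
    have hmul : g (u j) * S (β j * x)
        ≤ (w * g a₁ + (1 - w) * g a₂) * (w * S (b₁ * x) + (1 - w) * S (b₂ * x)) := by
      apply mul_le_mul hgc hSc hSβ.1.le
      nlinarith
    have hAB : (w * g a₁ + (1 - w) * g a₂) * (w * S (b₁ * x) + (1 - w) * S (b₂ * x))
        ≤ w * (g a₁ * S (b₁ * x)) + (1 - w) * (g a₂ * S (b₂ * x)) := by
      nlinarith [mul_nonneg (mul_nonneg hw0 hw1') hsign]
    have hgeom : X j ^ w * X (π j) ^ (1 - w) ≤ w * X j + (1 - w) * X (π j) :=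
      Real.geom_mean_le_arith_mean2_weighted hw0 hw1' (hXpos j).le (hXpos (π j)).le (by ring)
    have : w * X j + (1 - w) * X (π j) ≤ 1 - g (u j) * S (β j * x) := by
      simp only [hX]
      nlinarith
    linarith
  -- assemble the product inequality
  have hstep : ∏ i, (X i ^ w * X (π i) ^ (1 - w)) ≤ ∏ i, (1 - g (u i) * S (β i * x)) := by
    apply Finset.prod_le_prod
    · intro i _
      exact mul_nonneg (Real.rpow_nonneg (hXpos i).le w) (Real.rpow_nonneg (hXpos (π i)).le (1 - w))
    · intro i _
      exact key i
  have hPpos : 0 < ∏ i, X i := Finset.prod_pos (fun i _ => hXpos i)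
  have hre : ∏ i, (X i ^ w * X (π i) ^ (1 - w)) = ∏ i, X i := by
    rw [Finset.prod_mul_distrib]
    rw [Real.finset_prod_rpow _ _ (fun i _ => (hXpos i).le) w]
    have hcomp : ∏ i, X (π i) ^ (1 - w) = ∏ i, X i ^ (1 - w) :=
      Equiv.prod_comp π (fun i => X i ^ (1 - w))
    rw [hcomp, Real.finset_prod_rpow _ _ (fun i _ => (hXpos i).le) (1 - w)]
    rw [← Real.rpow_add hPpos]
    norm_num
  calc ∏ i, (1 - g (v i) * S (α i * x)) = ∏ i, X i := rfl
    _ = ∏ i, (X i ^ w * X (π i) ^ (1 - w)) := hre.symm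
    _ ≤ ∏ i, (1 - g (u i) * S (β i * x)) := hstep
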